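/- Lemma 8.10 (vanishing identity B): fix distinct constants a, b, c (playing the role of u^{1(α)}, u^{1(β)}, u^{1(ε)}) and constants p = m_β ε_β, q = m_ε ε_ε, and variables u^2, u^3, .... Define G_β^1 = p/(a−b), G_ε^1 = q/(a−c), and recursively G_β^{k+1} = −(1/(a−b))·Σ_{s=2}^{k+1} G_β^{k-s+2}·u^s, G_ε^{k+1} = −(1/(a−c))·Σ_{s=2}^{k+1} G_ε^{k-s+2}·u^s. Also set H_β = q/(b−c) and H_ε = p/(c−b). Then for every s ≥ 1: −Σ_{t=1}^{s+1} G_ε^{s-t+2}·G_β^{t} + G_β^{s+1}·H_β + G_ε^{s+1}·H_ε = 0. -/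
import Mathlib

private lemma swap_sum10 (n : ℕ) (f : ℕ → ℕ → ℝ) :
    ∑ t ∈ Finset.Icc 1 n, ∑ r ∈ Finset.Icc 2 (n + 2 - t), f t r
      = ∑ r ∈ Finset.Icc 2 (n + 1), ∑ t ∈ Finset.Icc 1 (n + 2 - r), f t r := by
  refine Finset.sum_comm' (fun t r => ?_)
  simp only [Finset.mem_Icc]
  omega

/-- **Lemma 8.10, vanishing identity `B`.** With distinct constants
`a, b, c` (the leading eigenvalues `u^{1(α)}, u^{1(β)}, u^{1(ε)}`), constants
`p = m_β ε_β`, `q = m_ε ε_ε`, and the recursively defined quantities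
`G_β^k = Γ^{k(α)}_{1(β)1(α)}`, `G_ε^k = Γ^{k(α)}_{1(ε)1(α)}` with
`H_β = q/(b−c) = Γ^{1(β)}_{1(ε)1(β)}`, `H_ε = p/(c−b) = Γ^{1(ε)}_{1(β)1(ε)}`, one has
`−Σ_{t=1}^{s+1} G_ε^{s−t+2} G_β^t + G_β^{s+1} H_β + G_ε^{s+1} H_ε = 0` for all `s ≥ 1`. -/
theorem statement10 (a b c p q : ℝ)
    (hab : a ≠ b) (hac : a ≠ c) (hbc : b ≠ c)
    (u : ℕ → ℝ) (Gβ Gε : ℕ → ℝ)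
    (hGβ1 : Gβ 1 = p / (a - b))
    (hGε1 : Gε 1 = q / (a - c))
    (hGβrec : ∀ k : ℕ, 1 ≤ k →
      Gβ (k + 1) = -(1 / (a - b)) * ∑ s ∈ Finset.Icc 2 (k + 1), Gβ (k + 2 - s) * u s)
    (hGεrec : ∀ k : ℕ, 1 ≤ k →
      Gε (k + 1) = -(1 / (a - c)) * ∑ s ∈ Finset.Icc 2 (k + 1), Gε (k + 2 - s) * u s) :
    ∀ s : ℕ, 1 ≤ s →
      -(∑ t ∈ Finset.Icc 1 (s + 1), Gε (s + 2 - t) * Gβ t)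
        + Gβ (s + 1) * (q / (b - c)) + Gε (s + 1) * (p / (c - b)) = 0 := by
  have hab' : a - b ≠ 0 := sub_ne_zero.mpr hab
  have hac' : a - c ≠ 0 := sub_ne_zero.mpr hac
  have hbc' : b - c ≠ 0 := sub_ne_zero.mpr hbc
  have hcb' : c - b ≠ 0 := fun h => hbc' (by linarith [sub_eq_zero.mp h])
  set S : ℕ → ℝ := fun n => ∑ t ∈ Finset.Icc 1 (n + 1), Gε (n + 2 - t) * Gβ t with hS
  set B : ℕ → ℝ := fun n => -(S n) + Gβ (n + 1) * (q / (b - c)) + Gε (n + 1) * (p / (c - b))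
    with hB
  -- Base case
  have hB0 : B 0 = 0 := by
    have : S 0 = Gε 1 * Gβ 1 := by simp [hS]
    simp only [hB, this, hGβ1, hGε1]
    field_simp
    ring
  -- Lemma A : splitting of S for n ≥ 1
  have lemA : ∀ n : ℕ, 1 ≤ n →
      S n = Gε 1 * Gβ (n + 1)
        - (1 / (a - c)) * ∑ r ∈ Finset.Icc 2 (n + 1), u r * S (n + 1 - r) := by
    intro n hn
    have hsplit : S n = (∑ t ∈ Finset.Icc 1 n, Gε (n + 2 - t) * Gβ t) + Gε 1 * Gβ (n + 1) := by
      simp only [hS]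
      rw [Finset.sum_Icc_succ_top (by omega : 1 ≤ n + 1)]
      have h1 : n + 2 - (n + 1) = 1 := by omega
      rw [h1]
    have hexp : ∀ t ∈ Finset.Icc 1 n,
        Gε (n + 2 - t) * Gβ t
          = -(1 / (a - c)) * ∑ r ∈ Finset.Icc 2 (n + 2 - t), Gε (n + 3 - t - r) * u r * Gβ t := by
      intro t ht
      simp only [Finset.mem_Icc] at ht
      have hk : n + 2 - t = (n + 1 - t) + 1 := by omega
      rw [hk, hGεrec (n + 1 - t) (by omega), mul_assoc, Finset.sum_mul,
        Finset.mul_sum, Finset.mul_sum]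
      apply Finset.sum_congr rfl
      intro r hr
      simp only [Finset.mem_Icc] at hr
      have h2 : n + 1 - t + 2 - r = n + 3 - t - r := by omega
      rw [h2]
    rw [hsplit, Finset.sum_congr rfl hexp, ← Finset.mul_sum, swap_sum10 n
      (fun t r => Gε (n + 3 - t - r) * u r * Gβ t)]
    have hinner : ∀ r ∈ Finset.Icc 2 (n + 1),
        ∑ t ∈ Finset.Icc 1 (n + 2 - r), Gε (n + 3 - t - r) * u r * Gβ t
          = u r * S (n + 1 - r) := by
      intro r hr
      simp only [Finset.mem_Icc] at hr
      rw [hS, Finset.mul_sum]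
      apply Finset.sum_congr
      · congr 1; omega
      · intro t ht
        simp only [Finset.mem_Icc] at ht
        have : n + 1 - r + 2 - t = n + 3 - t - r := by omega
        rw [this]; ring
    rw [Finset.sum_congr rfl hinner]
    ring
  -- main induction
  have key : ∀ n : ℕ, B n = 0 := by
    intro n
    induction n using Nat.strong_induction_on with
    | _ n ih =>
      match n with
      | 0 => exact hB0
      | Nat.succ m =>
        set n := m + 1
        have hn : 1 ≤ n := by omega
        set T1 : ℝ := ∑ r ∈ Finset.Icc 2 (n + 1), u r * S (n + 1 - r) with hT1
        have hA := lemA n hn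
        have hT2 : Gβ (n + 1) = -(1 / (a - b)) * ∑ r ∈ Finset.Icc 2 (n + 1),
            u r * Gβ (n + 2 - r) := by
          rw [hGβrec n hn]
          congr 1
          exact Finset.sum_congr rfl (fun r hr => by ring)
        have hT3 : Gε (n + 1) = -(1 / (a - c)) * ∑ r ∈ Finset.Icc 2 (n + 1),
            u r * Gε (n + 2 - r) := by
          rw [hGεrec n hn]
          congr 1
          exact Finset.sum_congr rfl (fun r hr => by ring)
        have hsumB : ∑ r ∈ Finset.Icc 2 (n + 1), u r * B (n + 1 - r) = 0 := by
          apply Finset.sum_eq_zero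
          intro r hr
          simp only [Finset.mem_Icc] at hr
          rw [ih (n + 1 - r) (by omega)]
          ring
        have hBdef : ∀ m : ℕ, B m = -(S m) + Gβ (m + 1) * (q / (b - c))
            + Gε (m + 1) * (p / (c - b)) := fun m => rfl
        -- express the vanishing sum in terms of T1, T2, T3
        have hexpand : ∑ r ∈ Finset.Icc 2 (n + 1), u r * B (n + 1 - r)
            = -T1 + (q / (b - c)) * (∑ r ∈ Finset.Icc 2 (n + 1), u r * Gβ (n + 2 - r))
              + (p / (c - b)) * (∑ r ∈ Finset.Icc 2 (n + 1), u r * Gε (n + 2 - r)) := by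
          rw [hT1, ← Finset.sum_neg_distrib, Finset.mul_sum, Finset.mul_sum,
            ← Finset.sum_add_distrib, ← Finset.sum_add_distrib]
          apply Finset.sum_congr rfl
          intro r hr
          simp only [Finset.mem_Icc] at hr
          rw [hBdef (n + 1 - r)]
          have : n + 1 - r + 1 = n + 2 - r := by omega
          rw [this]
          ring
        -- now pure algebra
        set X := ∑ r ∈ Finset.Icc 2 (n + 1), u r * Gβ (n + 2 - r) with hX
        set Y := ∑ r ∈ Finset.Icc 2 (n + 1), u r * Gε (n + 2 - r) with hY
        rw [hsumB] at hexpand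
        -- B n = -(S n) + ...
        rw [hBdef n, hA, hGε1]
        rw [hT2, hT3, ← hT1]
        -- now goal is in terms of T1, X, Y; use hexpand : 0 = -T1 + Hβ X + Hε Y
        have hT1eq : T1 = (q / (b - c)) * X + (p / (c - b)) * Y := by linarith [hexpand]
        rw [hT1eq]
        field_simp
        ring
  intro s _
  have := key s
  rw [hB, hS] at this
  simpa using this
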